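/- Let s_a > s_b > 0, let ŵ ∈ F_{s_b} with ŵ ≠ 0, let w_a ∈ F_{s_a} minimize (1/2)‖w‖² over F_{s_a} with w_a ≠ 0, and set ρ = −‖w_a‖² + (1/2)⟨w_a, ŵ⟩. For an index i, set x̄_i^⊥ = x̄_i − (⟨x̄_i, w_a⟩/‖w_a‖²)·w_a and ℓ_i = −(⟨w_a, x̄_i⟩/‖w_a‖²)·ρ + (1/2)⟨ŵ, x̄_i⟩ − ‖x̄_i^⊥‖·√((1/4)‖ŵ‖² − ρ²/‖w_a‖²). Then for every s ∈ [s_b, s_a] and every w_s ∈ F_s minimizing (1/2)‖w‖² over F_s: if ⟨w_a, x̄_i⟩ > (2‖x̄_i‖/‖ŵ‖)·ρ and ℓ_i > 1, then ⟨w_s, x̄_i⟩ > 1. -/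

import Mathlib

open scoped RealInnerProductSpace

set_option maxHeartbeats 1000000


open scoped RealInnerProductSpace

set_option maxHeartbeats 1000000

/-- Variational inequality for the minimizer of the norm over the hinge sublevel set. -/
lemma var_ineq_aux {m l : ℕ} (xb : Fin l → EuclideanSpace ℝ (Fin m)) (s : ℝ)
    (w₀ w : EuclideanSpace ℝ (Fin m))
    (hmin : ∀ v : EuclideanSpace ℝ (Fin m),
      ∑ j, max (1 - ⟪v, xb j⟫) 0 ≤ s → (1/2) * ‖w₀‖^2 ≤ (1/2) * ‖v‖^2)
    (h₀ : ∑ j, max (1 - ⟪w₀, xb j⟫) 0 ≤ s)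
    (hw : ∑ j, max (1 - ⟪w, xb j⟫) 0 ≤ s) :
    0 ≤ ⟪w₀, w - w₀⟫ := by
  by_contra hneg
  push_neg at hneg
  set d : EuclideanSpace ℝ (Fin m) := w - w₀ with hd
  have hδneg : ⟪w₀, d⟫ < 0 := hneg
  have hdne : d ≠ 0 := by
    intro h
    rw [h, inner_zero_right] at hδneg
    exact lt_irrefl 0 hδneg
  have hnd : (0:ℝ) < ‖d‖^2 := by
    have := norm_pos_iff.mpr hdne
    positivity
  set δ : ℝ := ⟪w₀, d⟫ with hδ
  set t : ℝ := min 1 (-δ / ‖d‖^2) with ht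
  have ht0 : 0 < t := lt_min one_pos (div_pos (by linarith) hnd)
  have ht1 : t ≤ 1 := min_le_left _ _
  have htd : t * ‖d‖^2 ≤ -δ := by
    have hle := min_le_right 1 (-δ / ‖d‖^2)
    calc t * ‖d‖^2 ≤ (-δ / ‖d‖^2) * ‖d‖^2 :=
          mul_le_mul_of_nonneg_right hle (le_of_lt hnd)
      _ = -δ := by field_simp
  -- feasibility of w₀ + t • d
  have hfeas : ∑ j, max (1 - ⟪w₀ + t • d, xb j⟫) 0 ≤ s := by
    have hterm : ∀ j, max (1 - ⟪w₀ + t • d, xb j⟫) 0 ≤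
        (1 - t) * max (1 - ⟪w₀, xb j⟫) 0 + t * max (1 - ⟪w, xb j⟫) 0 := by
      intro j
      have hlin : 1 - ⟪w₀ + t • d, xb j⟫ =
          (1 - t) * (1 - ⟪w₀, xb j⟫) + t * (1 - ⟪w, xb j⟫) := by
        rw [inner_add_left, real_inner_smul_left, hd, inner_sub_left]
        ring
      have h1 : (1:ℝ) - ⟪w₀, xb j⟫ ≤ max (1 - ⟪w₀, xb j⟫) 0 := le_max_left _ _
      have h2 : (1:ℝ) - ⟪w, xb j⟫ ≤ max (1 - ⟪w, xb j⟫) 0 := le_max_left _ _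
      have h1' : (0:ℝ) ≤ max (1 - ⟪w₀, xb j⟫) 0 := le_max_right _ _
      have h2' : (0:ℝ) ≤ max (1 - ⟪w, xb j⟫) 0 := le_max_right _ _
      apply max_le
      · rw [hlin]
        have ha := mul_le_mul_of_nonneg_left h1 (by linarith : (0:ℝ) ≤ 1 - t)
        have hb := mul_le_mul_of_nonneg_left h2 (le_of_lt ht0)
        linarith
      · have := mul_nonneg (by linarith : (0:ℝ) ≤ 1 - t) h1'
        have := mul_nonneg (le_of_lt ht0) h2'
        linarith
    calc ∑ j, max (1 - ⟪w₀ + t • d, xb j⟫) 0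
        ≤ ∑ j, ((1 - t) * max (1 - ⟪w₀, xb j⟫) 0 + t * max (1 - ⟪w, xb j⟫) 0) :=
          Finset.sum_le_sum (fun j _ => hterm j)
      _ = (1 - t) * ∑ j, max (1 - ⟪w₀, xb j⟫) 0 + t * ∑ j, max (1 - ⟪w, xb j⟫) 0 := by
          rw [Finset.sum_add_distrib, Finset.mul_sum, Finset.mul_sum]
      _ ≤ (1 - t) * s + t * s := by
          have h₀' := mul_le_mul_of_nonneg_left h₀ (by linarith : (0:ℝ) ≤ 1 - t)
          have hw' := mul_le_mul_of_nonneg_left hw (le_of_lt ht0)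
          linarith
      _ = s := by ring
  have hlt := hmin _ hfeas
  have hexp : ‖w₀ + t • d‖^2 = ‖w₀‖^2 + 2 * (t * δ) + t^2 * ‖d‖^2 := by
    have h1 : ‖t • d‖^2 = t^2 * ‖d‖^2 := by
      rw [norm_smul]; simp [mul_pow, sq_abs]
    rw [norm_add_sq_real, real_inner_smul_right, h1, ← hδ]
  rw [hexp] at hlt
  nlinarith [hlt, htd, hδneg, ht0]

lemma oneDim_aux (A P M r t₀ t : ℝ) (hP : 0 ≤ P) (hr : 0 < r)
    (hM : M = Real.sqrt (A^2 + P^2)) (hhyp : t₀ * M > -(r * A))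
    (htt : t₀ ≤ t) (htr : t ≤ r) :
    A * t₀ - P * Real.sqrt (r^2 - t₀^2) ≤ A * t - P * Real.sqrt (r^2 - t^2) := by
  have hM0 : 0 ≤ M := hM ▸ Real.sqrt_nonneg _
  have hM2 : M^2 = A^2 + P^2 := by
    rw [hM, Real.sq_sqrt (by positivity)]
  have hP2 : P^2 = M^2 - A^2 := by linarith
  have hAM : A ≤ M := by nlinarith [sq_nonneg P]
  have hAM' : -M ≤ A := by nlinarith [sq_nonneg P]
  -- t₀ > -r
  have ht₀r : -r < t₀ := by
    by_contra h
    push_neg at h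
    nlinarith [mul_nonneg (by linarith : (0:ℝ) ≤ -r - t₀) hM0,
      mul_nonneg hr.le (by linarith : (0:ℝ) ≤ M - A)]
  -- key claim: the derivative-sign quantity is nonnegative on [t₀, r]
  have hclaim : ∀ τ : ℝ, t₀ ≤ τ → τ ≤ r → 0 ≤ A * Real.sqrt (r^2 - τ^2) + P * τ := by
    intro τ hτ₀ hτr
    have hττ : (0:ℝ) ≤ r^2 - τ^2 := by nlinarith
    set Sτ := Real.sqrt (r^2 - τ^2) with hSτ
    have hS0 : 0 ≤ Sτ := Real.sqrt_nonneg _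
    have hS2 : Sτ^2 = r^2 - τ^2 := Real.sq_sqrt hττ
    have hτM : τ * M > -(r * A) := by
      have : t₀ * M ≤ τ * M := mul_le_mul_of_nonneg_right hτ₀ hM0
      linarith
    rcases le_or_gt 0 A with hA | hA
    · rcases le_or_gt 0 τ with hτ | hτ
      · have h1 := mul_nonneg hA hS0
        have h2 := mul_nonneg hP hτ
        linarith
      · -- A ≥ 0, τ < 0 : need A Sτ ≥ -P τ ; square, using  r A > -τ M ≥ 0
        have h2 : (0:ℝ) ≤ -(τ * M) := by nlinarith
        have f1 : 0 < r*A + τ*M := by linarith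
        have f2 : 0 < r*A - τ*M := by linarith
        have hsq : (r*A)^2 - (τ*M)^2 > 0 := by nlinarith [mul_pos f1 f2]
        have hsq2 : (A*Sτ)^2 - (P*τ)^2 = (r*A)^2 - (τ*M)^2 := by
          linear_combination A^2 * hS2 - τ^2 * hP2
        have hX : 0 ≤ A*Sτ := mul_nonneg hA hS0
        by_contra hcon
        push_neg at hcon
        have hgt : A*Sτ < P*(-τ) := by linarith
        have hlt2 : (A*Sτ)*(A*Sτ) < (P*(-τ))*(P*(-τ)) := mul_self_lt_mul_self hX hgt
        nlinarith [hsq, hsq2]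
    · -- A < 0 : then τ M > -rA > 0, so τ > 0 ; need P τ ≥ (-A) Sτ
      have hrA : 0 < -(r*A) := by nlinarith
      have f1 : 0 < τ*M + r*A := by linarith
      have f2 : 0 < τ*M - r*A := by linarith
      have hsq : (τ*M)^2 - (r*A)^2 > 0 := by nlinarith [mul_pos f1 f2]
      have hsq2 : (P*τ)^2 - (A*Sτ)^2 = (τ*M)^2 - (r*A)^2 := by
        linear_combination τ^2 * hP2 - A^2 * hS2
      have hMpos : 0 < M := by linarith
      have hτpos : 0 < τ := by
        by_contra h
        push_neg at h
        have : τ * M ≤ 0 := mul_nonpos_of_nonpos_of_nonneg h hM0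
        linarith
      have hX : 0 ≤ P*τ := mul_nonneg hP hτpos.le
      by_contra hcon
      push_neg at hcon
      have hgt : P*τ < (-A)*Sτ := by linarith
      have hlt2 : (P*τ)*(P*τ) < ((-A)*Sτ)*((-A)*Sτ) := mul_self_lt_mul_self hX hgt
      nlinarith [hsq, hsq2]
  rcases eq_or_lt_of_le htt with heq | hlt
  · rw [heq]
  set S₀ := Real.sqrt (r^2 - t₀^2) with hS₀
  set S₁ := Real.sqrt (r^2 - t^2) with hS₁
  have ht₀r' : t₀ ≤ r := le_trans htt htr
  have ht₀ltr : t₀ < r := lt_of_lt_of_le hlt htr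
  have hS₀pos : 0 < S₀ := Real.sqrt_pos.mpr (by nlinarith)
  have hS₁0 : 0 ≤ S₁ := Real.sqrt_nonneg _
  have hS₀2 : S₀^2 = r^2 - t₀^2 := Real.sq_sqrt (by nlinarith)
  have hS₁2 : S₁^2 = r^2 - t^2 := Real.sq_sqrt (by nlinarith)
  have C₀ := hclaim t₀ le_rfl ht₀r'
  have C₁ := hclaim t htt htr
  rw [← hS₀] at C₀
  rw [← hS₁] at C₁
  have E : 0 ≤ (t - t₀) * (A*(S₀+S₁) + P*(t+t₀)) :=
    mul_nonneg (by linarith) (by linarith)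
  have key : (A*t - P*S₁ - (A*t₀ - P*S₀)) * (S₀ + S₁)
      = (t - t₀) * (A*(S₀+S₁) + P*(t+t₀)) := by
    linear_combination P * hS₀2 - P * hS₁2
  by_contra hcon
  push_neg at hcon
  have hneg : (A*t - P*S₁ - (A*t₀ - P*S₀)) * (S₀ + S₁) < 0 :=
    mul_neg_of_neg_of_pos (by linarith) (by linarith)
  rw [key] at hneg
  linarith

/-- Theorem 18, rule (R1), of the paper — enhanced SSNSV: With
`F_s = {w : ∑ᵢ max(1 - ⟨w, x̄ᵢ⟩, 0) ≤ s}`, `s_a > s_b > 0`, `ŵ ∈ F_{s_b}` (`ŵ ≠ 0`),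
`w_a` the minimizer of `(1/2)‖w‖²` over `F_{s_a}` (`w_a ≠ 0`),
`ρ = -‖w_a‖² + (1/2)⟨w_a, ŵ⟩`, `x̄ᵢ^⊥ = x̄ᵢ - (⟨x̄ᵢ,w_a⟩/‖w_a‖²)w_a` and
`ℓᵢ = -(⟨w_a,x̄ᵢ⟩/‖w_a‖²)ρ + (1/2)⟨ŵ,x̄ᵢ⟩ - ‖x̄ᵢ^⊥‖√((1/4)‖ŵ‖² - ρ²/‖w_a‖²)`:
for every `s ∈ [s_b, s_a]` and every minimizer `w_s` of `(1/2)‖w‖²` over `F_s`,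
if `⟨w_a, x̄ᵢ⟩ > (2‖x̄ᵢ‖/‖ŵ‖)ρ` and `ℓᵢ > 1`, then `⟨w_s, x̄ᵢ⟩ > 1`. -/
theorem essnsv_screening_rule (n l : ℕ) (hn : 1 ≤ n) (hl : 1 ≤ l)
    (x : Fin l → EuclideanSpace ℝ (Fin n)) (y : Fin l → ℝ)
    (hy : ∀ i, y i = 1 ∨ y i = -1)
    (xbar : Fin l → EuclideanSpace ℝ (Fin n)) (hxbar : ∀ i, xbar i = y i • x i)
    (sa sb : ℝ) (hsb : 0 < sb) (hsab : sb < sa)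
    (what : EuclideanSpace ℝ (Fin n)) (hwhat_ne : what ≠ 0)
    (hwhat_feas : ∑ i, max (1 - ⟪what, xbar i⟫) 0 ≤ sb)
    (wa : EuclideanSpace ℝ (Fin n)) (hwa_ne : wa ≠ 0)
    (hwa_feas : ∑ i, max (1 - ⟪wa, xbar i⟫) 0 ≤ sa)
    (hwa_min : ∀ w : EuclideanSpace ℝ (Fin n),
      ∑ i, max (1 - ⟪w, xbar i⟫) 0 ≤ sa → (1/2) * ‖wa‖^2 ≤ (1/2) * ‖w‖^2)
    (ρ : ℝ) (hρ : ρ = -‖wa‖^2 + (1/2) * ⟪wa, what⟫)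
    (i : Fin l)
    (xperp : EuclideanSpace ℝ (Fin n))
    (hxperp : xperp = xbar i - (⟪xbar i, wa⟫ / ‖wa‖^2) • wa)
    (ℓi : ℝ)
    (hℓi : ℓi = -(⟪wa, xbar i⟫ / ‖wa‖^2) * ρ + (1/2) * ⟪what, xbar i⟫
      - ‖xperp‖ * Real.sqrt ((1/4) * ‖what‖^2 - ρ^2 / ‖wa‖^2)) :
    ∀ s : ℝ, sb ≤ s → s ≤ sa →
      ∀ ws : EuclideanSpace ℝ (Fin n),
        ∑ j, max (1 - ⟪ws, xbar j⟫) 0 ≤ s →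
        (∀ w : EuclideanSpace ℝ (Fin n),
          ∑ j, max (1 - ⟪w, xbar j⟫) 0 ≤ s → (1/2) * ‖ws‖^2 ≤ (1/2) * ‖w‖^2) →
        ⟪wa, xbar i⟫ > (2 * ‖xbar i‖ / ‖what‖) * ρ → ℓi > 1 →
        ⟪ws, xbar i⟫ > 1 := by
  intro s hsbs hssa ws hws_feas hws_min hgeom hℓ
  have hna : (0:ℝ) < ‖wa‖ := norm_pos_iff.mpr hwa_ne
  have hnw : (0:ℝ) < ‖what‖ := norm_pos_iff.mpr hwhat_ne
  set na : ℝ := ‖wa‖ with hna_def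
  set c₁ : ℝ := ⟪wa, xbar i⟫ with hc₁
  set r : ℝ := ‖what‖ / 2 with hr_def
  have hr : 0 < r := by positivity
  -- variational inequality for wa over F_{sa}
  have hws_sa : ∑ j, max (1 - ⟪ws, xbar j⟫) 0 ≤ sa := le_trans hws_feas hssa
  have VI1 : 0 ≤ ⟪wa, ws - wa⟫ := var_ineq_aux xbar sa wa ws hwa_min hwa_feas hws_sa
  rw [inner_sub_right, real_inner_self_eq_norm_sq] at VI1
  -- variational inequality for ws over F_s
  have hwhat_s : ∑ j, max (1 - ⟪what, xbar j⟫) 0 ≤ s := by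
    calc ∑ j, max (1 - ⟪what, xbar j⟫) 0 ≤ sb := hwhat_feas
      _ ≤ s := hsbs
  have VI2 : 0 ≤ ⟪ws, what - ws⟫ := var_ineq_aux xbar s ws what hws_min hws_feas hwhat_s
  rw [inner_sub_right, real_inner_self_eq_norm_sq] at VI2
  -- the ball : u = ws - what/2 has norm ≤ r
  set u : EuclideanSpace ℝ (Fin n) := ws - (1/2 : ℝ) • what with hu_def
  have husq : ‖u‖^2 ≤ r^2 := by
    have hexp : ‖u‖^2 = ‖ws‖^2 - 2 * ((1/2) * ⟪ws, what⟫) + (1/2)^2 * ‖what‖^2 := by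
      rw [hu_def, norm_sub_sq_real, real_inner_smul_right, norm_smul]
      rw [Real.norm_eq_abs]
      rw [mul_pow, sq_abs]
    rw [hexp, hr_def]
    linarith [VI2]
  have hur : ‖u‖ ≤ r := by
    have h1 := Real.sqrt_le_sqrt husq
    rwa [Real.sqrt_sq (norm_nonneg u), Real.sqrt_sq hr.le] at h1
  -- decomposition of xbar i
  have hcomm : ⟪xbar i, wa⟫ = c₁ := by rw [hc₁]; exact real_inner_comm _ _
  have hdecomp : xbar i = (c₁ / na^2) • wa + xperp := by
    rw [hxperp, hcomm]
    abel
  have hwx : ⟪wa, xperp⟫ = 0 := by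
    rw [hxperp, inner_sub_right, real_inner_smul_right, real_inner_self_eq_norm_sq,
      hcomm, ← hna_def, ← hc₁]
    field_simp
    ring
  set P : ℝ := ‖xperp‖ with hP_def
  have hP : 0 ≤ P := norm_nonneg _
  set A : ℝ := c₁ / na with hA_def
  set M : ℝ := ‖xbar i‖ with hM_def
  have hsm : ∀ (q:ℝ) (v : EuclideanSpace ℝ (Fin n)), ‖q • v‖^2 = q^2 * ‖v‖^2 := by
    intro q v
    rw [norm_smul, mul_pow, Real.norm_eq_abs, sq_abs]
  have hna2 : na ≠ 0 := ne_of_gt hna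
  have hM2 : M^2 = A^2 + P^2 := by
    have h0 : M^2 = ‖(c₁ / na^2) • wa + xperp‖^2 := by rw [hM_def, hdecomp]
    rw [h0, norm_add_sq_real, real_inner_smul_left, hwx, hsm, ← hP_def, ← hna_def, hA_def]
    field_simp
    ring
  have hMeq : M = Real.sqrt (A^2 + P^2) := by
    have hM0 : (0:ℝ) ≤ M := hM_def ▸ norm_nonneg _
    rw [← hM2, Real.sqrt_sq hM0]
  set β : ℝ := ⟪wa, u⟫ with hβ_def
  set t : ℝ := β / na with ht_def
  set t₀ : ℝ := -ρ / na with ht₀_def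
  have VI1' : 0 ≤ ⟪wa, ws⟫ - na^2 := by rw [hna_def]; exact VI1
  have hβ : -ρ ≤ β := by
    have h1 : β = ⟪wa, ws⟫ - (1/2) * ⟪wa, what⟫ := by
      rw [hβ_def, hu_def, inner_sub_right, real_inner_smul_right]
    rw [h1, hρ]
    linarith
  have htt₀ : t₀ ≤ t := by
    rw [ht_def, ht₀_def, div_le_div_iff₀ hna hna]
    linarith [mul_le_mul_of_nonneg_right hβ hna.le]
  have htr : t ≤ r := by
    have hcs : β ≤ na * ‖u‖ := by rw [hβ_def, hna_def]; exact real_inner_le_norm wa u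
    rw [ht_def, div_le_iff₀ hna]
    linarith [mul_le_mul_of_nonneg_left hur hna.le]
  -- hypothesis for the 1-D lemma
  have hhyp : t₀ * M > -(r * A) := by
    have h2r : ‖what‖ = 2 * r := by rw [hr_def]; ring
    rw [h2r] at hgeom
    have key : M * ρ < r * c₁ := by
      have h' : 2 * M / (2*r) * ρ = M * ρ / r := by
        field_simp
      rw [h', gt_iff_lt, div_lt_iff₀ hr] at hgeom
      linarith
    rw [ht₀_def, hA_def, gt_iff_lt]
    have e1 : -ρ/na * M = (-(M * ρ))/na := by ring
    have e2 : -(r * (c₁/na)) = (-(r*c₁))/na := by ring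
    rw [e1, e2, div_lt_div_iff₀ hna hna]
    linarith [mul_lt_mul_of_pos_right key hna]
  -- the orthogonal part of u
  set uperp : EuclideanSpace ℝ (Fin n) := u - (β/na^2) • wa with hup_def
  have hwu : ⟪wa, uperp⟫ = 0 := by
    rw [hup_def, inner_sub_right, real_inner_smul_right, real_inner_self_eq_norm_sq,
      ← hna_def, ← hβ_def]
    field_simp
    ring
  have hudecomp : u = (β/na^2) • wa + uperp := by rw [hup_def]; abel
  have hupsq : ‖uperp‖^2 = ‖u‖^2 - t^2 := by
    have h0 : ‖u‖^2 = ‖(β/na^2) • wa + uperp‖^2 := by rw [← hudecomp]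
    rw [h0, norm_add_sq_real, real_inner_smul_left, hwu, hsm, ← hna_def, ht_def]
    field_simp
    ring
  have hrt2 : 0 ≤ r^2 - t^2 := by
    have h0 : (0:ℝ) ≤ ‖uperp‖^2 := sq_nonneg _
    linarith
  have hupS : ‖uperp‖ ≤ Real.sqrt (r^2 - t^2) := by
    have h1 : ‖uperp‖ = Real.sqrt (‖uperp‖^2) := (Real.sqrt_sq (norm_nonneg _)).symm
    rw [h1]
    apply Real.sqrt_le_sqrt
    rw [hupsq]
    linarith
  -- lower bound for ⟪u, xbar i⟫
  have hux : A * t - P * Real.sqrt (r^2 - t^2) ≤ ⟪u, xbar i⟫ := by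
    have h1 : ⟪u, xbar i⟫ = (c₁/na^2) * β + ⟪u, xperp⟫ := by
      have hc2 : ⟪u, wa⟫ = β := by rw [hβ_def]; exact real_inner_comm _ _
      nth_rewrite 1 [hdecomp]
      rw [inner_add_right, real_inner_smul_right, hc2]
    have h2 : ⟪u, xperp⟫ = ⟪uperp, xperp⟫ := by
      nth_rewrite 1 [hudecomp]
      rw [inner_add_left, real_inner_smul_left, hwx]
      ring
    have h3 : -(‖uperp‖ * P) ≤ ⟪uperp, xperp⟫ := by
      have ha := abs_real_inner_le_norm uperp xperp
      have hb := neg_abs_le (⟪uperp, xperp⟫ : ℝ)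
      rw [← hP_def] at ha
      linarith
    have h4 : ‖uperp‖ * P ≤ Real.sqrt (r^2 - t^2) * P := mul_le_mul_of_nonneg_right hupS hP
    have hAt : (c₁/na^2) * β = A * t := by
      rw [hA_def, ht_def, div_mul_div_comm, sq]
      ring
    rw [h1, h2, hAt]
    linarith
  -- apply the 1-D lemma
  have hmain := oneDim_aux A P M r t₀ t hP hr hMeq hhyp htt₀ htr
  have hsplit : ⟪ws, xbar i⟫ = ⟪u, xbar i⟫ + (1/2) * ⟪what, xbar i⟫ := by
    have hws_eq : ws = u + (1/2 : ℝ) • what := by rw [hu_def]; abel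
    rw [hws_eq, inner_add_left, real_inner_smul_left]
  have hsqrt_eq : Real.sqrt ((1/4) * ‖what‖^2 - ρ^2/na^2) = Real.sqrt (r^2 - t₀^2) := by
    congr 1
    rw [hr_def, ht₀_def]
    field_simp
    try ring
  have hAt₀ : -(c₁/na^2) * ρ = A * t₀ := by
    rw [hA_def, ht₀_def, div_mul_div_comm, sq]
    ring
  have hfinal : ℓi ≤ ⟪ws, xbar i⟫ := by
    rw [hℓi, hsqrt_eq, hAt₀, hsplit]
    linarith
  linarith
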